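/- Let V be a real Hilbert space and let u, u_app : [0,T] → V be differentiable curves. Set e(t) = u(t) − u_app(t) and suppose e satisfies e'(t) = F(u(t)) − F(u_app(t)) + r(t) for some Lipschitz map F : V → V and residual curve r : [0,T] → V. If β(t) is an upper bound for the local logarithmic Lipschitz constant L[F](u_app(t)) and α(t) = ‖r(t)‖, then for all t ∈ [0,T], ‖e(t)‖ ≤ ∫₀ᵗ α(s)·exp(∫ₛᵗ β(τ) dτ) ds + exp(∫₀ᵗ β(τ) dτ)·‖e(0)‖. -/

import Mathlib

open MeasureTheory Set Filter intervalIntegral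
open scoped RealInnerProductSpace Topology


/-- Generalized fencing lemma: slope comparison at contact points. -/
theorem my_fence {f C : ℝ → ℝ} {a b : ℝ}
    (hf : ContinuousOn f (Icc a b)) (hC : ContinuousOn C (Icc a b))
    (ha : f a ≤ C a)
    (key : ∀ x ∈ Ico a b, f x = C x →
      ∃ r : ℝ, (∀ᶠ z in 𝓝[>] x, slope f x z < r) ∧ (∀ᶠ z in 𝓝[>] x, r < slope C x z)) :
    ∀ x ∈ Icc a b, f x ≤ C x := by
  have main : Icc a b ⊆ {x | f x ≤ C x} := by
    set s := {x | f x ≤ C x} ∩ Icc a b with hs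
    have A : ContinuousOn (fun x => (f x, C x)) (Icc a b) := hf.prodMk hC
    have hcl : IsClosed s := by
      simp only [hs, inter_comm]
      exact A.preimage_isClosed_of_isClosed isClosed_Icc OrderClosedTopology.isClosed_le'
    apply hcl.Icc_subset_of_forall_exists_gt ha
    rintro x ⟨hxB : f x ≤ C x, xab⟩ y hy
    rcases hxB.lt_or_eq with hxB | hxB
    · refine nonempty_of_mem (inter_mem ?_ (Ioc_mem_nhdsGT_of_mem ⟨le_rfl, hy⟩))
      have h1 : ∀ᶠ z in 𝓝[Icc a b] x, f z < C z :=
        A x (Ico_subset_Icc_self xab)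
          (IsOpen.mem_nhds (isOpen_lt continuous_fst continuous_snd) hxB)
      have h2 : ∀ᶠ z in 𝓝[>] x, f z < C z := nhdsWithin_le_of_mem (mem_of_superset (Ioc_mem_nhdsGT_of_mem xab) Ioc_subset_Icc_self) h1
      exact h2.mono fun z => le_of_lt
    · obtain ⟨r, hfr, hCr⟩ := key x xab hxB
      obtain ⟨z, hfz, hzC, hz⟩ : ∃ z, slope f x z < r ∧ r < slope C x z ∧ z ∈ Ioc x y :=
        ((hfr.and (hCr.and (Ioc_mem_nhdsGT_of_mem ⟨le_rfl, hy⟩)))).exists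
      refine ⟨z, ?_, hz⟩
      have hlt := (hfz.trans hzC).le
      rwa [slope_def_field, slope_def_field, div_le_div_iff_of_pos_right (sub_pos.2 hz.1), hxB,
        sub_le_sub_iff_right] at hlt
  exact fun x hx => main hx

/-- Lower-semicontinuity average bound (extracted from Mathlib's FTC-2 proof). -/
theorem my_lsc_avg {G' : ℝ → EReal} {a b : ℝ} (G'cont : LowerSemicontinuous G')
    (G'int : IntegrableOn (fun x => (G' x).toReal) (Icc a b))
    (G'lt_top : ∀ᵐ x ∂(volume.restrict (Icc a b)), G' x < ⊤)
    (G'ne_bot : ∀ x, G' x ≠ ⊥)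
    {t : ℝ} (ht : t ∈ Ico a b) {y : ℝ} (hy : (y : EReal) < G' t) :
    ∀ᶠ u in 𝓝[>] t, (u - t) * y ≤ ∫ w in t..u, (G' w).toReal := by
  have B : ∀ᶠ u in 𝓝 t, (y : EReal) < G' u := G'cont.lowerSemicontinuousAt _ _ hy
  rcases mem_nhds_iff_exists_Ioo_subset.1 B with ⟨m, M, ⟨hm, hM⟩, H⟩
  have hIoo : Ioo t (min M b) ∈ 𝓝[>] t := Ioo_mem_nhdsGT (lt_min hM ht.2)
  filter_upwards [hIoo] with u hu
  have I : Icc t u ⊆ Icc a b := Icc_subset_Icc ht.1 (hu.2.le.trans (min_le_right _ _))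
  calc
    (u - t) * y = ∫ _ in Icc t u, y := by
      simp only [Measure.real, hu.left.le, MeasureTheory.integral_const, smul_eq_mul, sub_nonneg,
        MeasurableSet.univ, Real.volume_Icc, Measure.restrict_apply, univ_inter,
        ENNReal.toReal_ofReal]
    _ ≤ ∫ w in t..u, (G' w).toReal := by
      rw [intervalIntegral.integral_of_le hu.1.le, ← integral_Icc_eq_integral_Ioc]
      apply setIntegral_mono_ae_restrict
      · exact integrableOn_const (by simp [Real.volume_Icc])
      · exact IntegrableOn.mono_set G'int I
      · have C1 : ∀ᵐ x : ℝ ∂volume.restrict (Icc t u), G' x < ⊤ :=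
          ae_mono (Measure.restrict_mono I le_rfl) G'lt_top
        have C2 : ∀ᵐ x : ℝ ∂volume.restrict (Icc t u), x ∈ Icc t u :=
          ae_restrict_mem measurableSet_Icc
        filter_upwards [C1, C2] with x G'x hx
        apply EReal.coe_le_coe_iff.1
        have hxIoo : x ∈ Ioo m M := by
          simp only [hm.trans_le hx.left,
            (hx.right.trans_lt hu.right).trans_le (min_le_left M b), mem_Ioo, and_self_iff]
        refine (H hxIoo).out.le.trans_eq ?_
        exact (EReal.coe_toReal G'x.ne (G'ne_bot x)).symm

theorem my_int_mul {g c : ℝ → ℝ} {b : ℝ}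
    (hg : IntegrableOn g (Icc 0 b)) (hc : ContinuousOn c (Icc 0 b)) :
    IntegrableOn (fun s => c s * g s) (Icc 0 b) := by
  obtain ⟨C, hC⟩ := isCompact_Icc.exists_bound_of_continuousOn hc
  refine Integrable.bdd_mul (c := C) hg (hc.aestronglyMeasurable measurableSet_Icc) ?_
  filter_upwards [ae_restrict_mem measurableSet_Icc] with x hx
  exact hC x hx

theorem my_gronwall {φ ψ β γ : ℝ → ℝ} {b : ℝ} (hb : 0 ≤ b)
    (hφpos : ∀ t, 0 < φ t)
    (hφd : ∀ t ∈ Icc (0:ℝ) b, HasDerivAt φ (ψ t) t)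
    (hle : ∀ t ∈ Icc (0:ℝ) b, ψ t ≤ β t * φ t + γ t)
    (hβint : IntervalIntegrable β volume 0 b)
    (hγint : IntervalIntegrable γ volume 0 b)
    (hγ0 : ∀ t, 0 ≤ γ t) :
    φ b ≤ Real.exp (∫ s in (0:ℝ)..b, β s) * φ 0
      + ∫ s in (0:ℝ)..b, γ s * Real.exp (∫ τ in s..b, β τ) := by
  have hβOn : IntegrableOn β (Icc 0 b) :=
    (intervalIntegrable_iff_integrableOn_Icc_of_le hb).1 hβint
  have hγOn : IntegrableOn γ (Icc 0 b) :=
    (intervalIntegrable_iff_integrableOn_Icc_of_le hb).1 hγint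
  set Bf : ℝ → ℝ := fun s => ∫ x in (0:ℝ)..s, β x with hBf
  have hsub : ∀ {s t : ℝ}, s ∈ Icc (0:ℝ) b → t ∈ Icc (0:ℝ) b →
      IntervalIntegrable β volume s t := by
    intro s t hs ht
    exact hβint.mono_set (by rw [uIcc_of_le hb]; exact uIcc_subset_Icc hs ht)
  have hBadd : ∀ s ∈ Icc (0:ℝ) b, Bf s + ∫ τ in s..b, β τ = Bf b := by
    intro s hs
    exact integral_add_adjacent_intervals (hsub (left_mem_Icc.2 hb) hs)
      (hsub hs (right_mem_Icc.2 hb))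
  set A := Real.exp (∫ s in (0:ℝ)..b, β s) * φ 0
      + ∫ s in (0:ℝ)..b, γ s * Real.exp (∫ τ in s..b, β τ) with hA
  have key : ∀ δ : ℝ, δ ∈ Ioo (0:ℝ) 1 →
      φ b ≤ Real.exp δ * (A + δ * Real.exp (Bf b)) := by
    intro δ hδ
    set μ := volume.restrict (Icc (0:ℝ) b) with hμ
    haveI : IsFiniteMeasure μ :=
      ⟨by rw [hμ, Measure.restrict_apply_univ]; exact isCompact_Icc.measure_lt_top⟩
    -- Vitali–Carathéodory for β
    obtain ⟨G, βG, Gcont, Gint, Gtop, Gintlt⟩ :=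
      exists_lt_lowerSemicontinuous_integral_lt (μ := μ) β hβOn hδ.1
    have Gne_bot : ∀ x, G x ≠ ⊥ := fun x => ((EReal.bot_lt_coe (β x)).trans (βG x)).ne'
    set β' : ℝ → ℝ := fun x => max (β x) ((G x).toReal) with hβ'
    have hββ' : ∀ x, β x ≤ β' x := fun x => le_max_left _ _
    have hβ'ae : β' =ᵐ[μ] fun x => (G x).toReal := by
      filter_upwards [Gtop] with x hx
      have hcoe : (β x : EReal) < ((G x).toReal : EReal) := by
        rw [EReal.coe_toReal hx.ne (Gne_bot x)]; exact βG x
      exact max_eq_right (EReal.coe_le_coe_iff.1 hcoe.le)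
    have hβ'On : IntegrableOn β' (Icc 0 b) := Gint.congr hβ'ae.symm
    have hβ'int : IntervalIntegrable β' volume 0 b :=
      (intervalIntegrable_iff_integrableOn_Icc_of_le hb).2 hβ'On
    have hsub' : ∀ {s t : ℝ}, s ∈ Icc (0:ℝ) b → t ∈ Icc (0:ℝ) b →
        IntervalIntegrable β' volume s t := by
      intro s t hs ht
      exact hβ'int.mono_set (by rw [uIcc_of_le hb]; exact uIcc_subset_Icc hs ht)
    -- excess bound
    have hIccIoc : ∀ f : ℝ → ℝ, (∫ x in (0:ℝ)..b, f x) = ∫ x, f x ∂μ := by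
      intro f
      rw [integral_of_le hb, hμ, integral_Icc_eq_integral_Ioc]
    have hexc : ∀ s ∈ Icc (0:ℝ) b, ∀ t ∈ Icc (0:ℝ) b, s ≤ t →
        (∫ x in s..t, β' x) ≤ (∫ x in s..t, β x) + δ := by
      intro s hs t ht hst
      have hdiff : (∫ x in s..t, (β' x - β x)) ≤ ∫ x in (0:ℝ)..b, (β' x - β x) := by
        rw [integral_of_le hst, integral_of_le hb]
        refine setIntegral_mono_set
          (IntegrableOn.mono_set (hβ'On.sub hβOn) Ioc_subset_Icc_self) ?_ ?_
        · filter_upwards [] with x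
          simp only [Pi.zero_apply, sub_nonneg]
          exact hββ' x
        · exact HasSubset.Subset.eventuallyLE (Ioc_subset_Ioc hs.1 ht.2)
      have h0b : (∫ x in (0:ℝ)..b, (β' x - β x)) < δ := by
        rw [integral_sub hβ'int hβint]
        have e1 : (∫ x in (0:ℝ)..b, β' x) = ∫ x, (G x).toReal ∂μ := by
          rw [hIccIoc]; exact integral_congr_ae hβ'ae
        have e2 : (∫ x in (0:ℝ)..b, β x) = ∫ x, β x ∂μ := hIccIoc β
        rw [e1, e2]; linarith [Gintlt]
      calc (∫ x in s..t, β' x) = (∫ x in s..t, (β' x - β x)) + ∫ x in s..t, β x := by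
            rw [integral_sub (hsub' hs ht) (hsub hs ht)]; ring
        _ ≤ (∫ x in (0:ℝ)..b, (β' x - β x)) + ∫ x in s..t, β x := by linarith
        _ ≤ (∫ x in s..t, β x) + δ := by linarith
    -- primitive of β'
    set B' : ℝ → ℝ := fun s => ∫ x in (0:ℝ)..s, β' x with hB'def
    have hB'cont : ContinuousOn B' (Icc 0 b) := by
      have h := continuousOn_primitive_interval (a := (0:ℝ)) (b := b) (μ := volume) (f := β')
        (by rwa [uIcc_of_le hb])
      rwa [uIcc_of_le hb] at h
    have hB'add : ∀ x ∈ Icc (0:ℝ) b, ∀ z ∈ Icc (0:ℝ) b,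
        B' z = B' x + ∫ w in x..z, β' w := by
      intro x hx z hz
      have h := integral_add_adjacent_intervals (hsub' (left_mem_Icc.2 hb) hx) (hsub' hx hz)
      simp only [hB'def]
      linarith
    set h : ℝ → ℝ := fun s => Real.exp (-(B' s)) * γ s with hhdef
    have hh0 : ∀ s, 0 ≤ h s := fun s => mul_nonneg (Real.exp_pos _).le (hγ0 s)
    have hexpcont : ContinuousOn (fun s => Real.exp (-(B' s))) (Icc 0 b) :=
      Real.continuous_exp.comp_continuousOn hB'cont.neg
    have hhOn : IntegrableOn h (Icc 0 b) := my_int_mul hγOn hexpcont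
    have hhInt : IntervalIntegrable h volume 0 b :=
      (intervalIntegrable_iff_integrableOn_Icc_of_le hb).2 hhOn
    obtain ⟨H, hHlt, Hcont, Hint, Htop, Hintlt⟩ :=
      exists_lt_lowerSemicontinuous_integral_lt (μ := μ) h hhOn hδ.1
    have Hne_bot : ∀ x, H x ≠ ⊥ := fun x => ((EReal.bot_lt_coe (h x)).trans (hHlt x)).ne'
    set H' : ℝ → ℝ := fun x => max (h x) ((H x).toReal) with hH'def
    have hH'ae : H' =ᵐ[μ] fun x => (H x).toReal := by
      filter_upwards [Htop] with x hx
      have hco : (h x : EReal) < ((H x).toReal : EReal) := by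
        rw [EReal.coe_toReal hx.ne (Hne_bot x)]; exact hHlt x
      exact max_eq_right (EReal.coe_le_coe_iff.1 hco.le)
    have hH'On : IntegrableOn H' (Icc 0 b) := Hint.congr hH'ae.symm
    have hH'int : IntervalIntegrable H' volume 0 b :=
      (intervalIntegrable_iff_integrableOn_Icc_of_le hb).2 hH'On
    have hsubH : ∀ {s t : ℝ}, s ∈ Icc (0:ℝ) b → t ∈ Icc (0:ℝ) b →
        IntervalIntegrable H' volume s t := by
      intro s t hs ht
      exact hH'int.mono_set (by rw [uIcc_of_le hb]; exact uIcc_subset_Icc hs ht)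
    set ft : ℝ → ℝ := fun t => φ t * Real.exp (-(B' t)) with hftdef
    set Cf : ℝ → ℝ := fun t => ft 0 + ∫ s in (0:ℝ)..t, H' s with hCfdef
    have hφcont : ContinuousOn φ (Icc 0 b) := fun t ht =>
      (hφd t ht).continuousAt.continuousWithinAt
    have hftc : ContinuousOn ft (Icc 0 b) := hφcont.mul hexpcont
    have hCfc : ContinuousOn Cf (Icc 0 b) := by
      apply continuousOn_const.add
      have h := continuousOn_primitive_interval (a := (0:ℝ)) (b := b) (μ := volume) (f := H')
        (by rwa [uIcc_of_le hb])
      rwa [uIcc_of_le hb] at h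
    have hIsub : ∀ {x z : ℝ}, x ∈ Icc (0:ℝ) b → z ∈ Icc (0:ℝ) b → Set.uIoc x z ⊆ Icc 0 b :=
      fun hx hz => uIoc_subset_uIcc.trans (uIcc_subset_Icc hx hz)
    have hβ'vol : ∀ᵐ w ∂(volume : Measure ℝ), w ∈ Icc (0:ℝ) b → β' w = (G w).toReal :=
      (ae_restrict_iff' measurableSet_Icc).1 hβ'ae
    have hH'vol : ∀ᵐ w ∂(volume : Measure ℝ), w ∈ Icc (0:ℝ) b → H' w = (H w).toReal :=
      (ae_restrict_iff' measurableSet_Icc).1 hH'ae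
    have hβ'sub : ∀ {x z : ℝ}, x ∈ Icc (0:ℝ) b → z ∈ Icc (0:ℝ) b →
        (∫ w in x..z, β' w) = ∫ w in x..z, (G w).toReal := by
      intro x z hx hz
      apply intervalIntegral.integral_congr_ae
      filter_upwards [hβ'vol] with w hw hmem
      exact hw (hIsub hx hz hmem)
    have hH'sub : ∀ {x z : ℝ}, x ∈ Icc (0:ℝ) b → z ∈ Icc (0:ℝ) b →
        (∫ w in x..z, H' w) = ∫ w in x..z, (H w).toReal := by
      intro x z hx hz
      apply intervalIntegral.integral_congr_ae
      filter_upwards [hH'vol] with w hw hmem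
      exact hw (hIsub hx hz hmem)
    -- the key slope estimate at each point
    have hkey : ∀ x ∈ Ico (0:ℝ) b, ft x = Cf x →
        ∃ r : ℝ, (∀ᶠ z in 𝓝[>] x, slope ft x z < r) ∧ (∀ᶠ z in 𝓝[>] x, r < slope Cf x z) := by
      intro x hx _
      have hxI : x ∈ Icc (0:ℝ) b := Ico_subset_Icc_self hx
      obtain ⟨y, hy1, hy2⟩ := EReal.lt_iff_exists_real_btwn.1 (βG x)
      have hyβ : β x < y := by exact_mod_cast hy1
      set ζ : ℝ → ℝ := fun z => φ z * (Real.exp (-(B' x)) * Real.exp (-(y * (z - x)))) with hζdef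
      have hg1 : HasDerivAt (fun z : ℝ => Real.exp (-(y * (z - x)))) (-y) x := by
        have h1 : HasDerivAt (fun z : ℝ => -(y * (z - x))) (-y) x := by
          simpa using (((hasDerivAt_id x).sub_const x).const_mul y).fun_neg
        simpa using h1.exp
      have hgc : HasDerivAt (fun z : ℝ => Real.exp (-(B' x)) * Real.exp (-(y * (z - x))))
          (Real.exp (-(B' x)) * (-y)) x := hg1.const_mul _
      have hζd : HasDerivAt ζ (Real.exp (-(B' x)) * (ψ x - y * φ x)) x := by
        have h2 := (hφd x hxI).mul hgc
        have h3 : ψ x * (Real.exp (-(B' x)) * Real.exp (-(y * (x - x)))) +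
            φ x * (Real.exp (-(B' x)) * -y) = Real.exp (-(B' x)) * (ψ x - y * φ x) := by
          simp only [sub_self, mul_zero, neg_zero, Real.exp_zero, mul_one]
          ring
        rw [h3] at h2
        exact h2
      have hDlt : Real.exp (-(B' x)) * (ψ x - y * φ x) < h x := by
        have h4 : ψ x - y * φ x < γ x := by
          have h5 := hle x hxI
          nlinarith [hφpos x, hyβ]
        have h6 := mul_lt_mul_of_pos_left h4 (Real.exp_pos (-(B' x)))
        exact h6
      set r : ℝ := (Real.exp (-(B' x)) * (ψ x - y * φ x) + h x) / 2 with hrdef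
      have hr1 : Real.exp (-(B' x)) * (ψ x - y * φ x) < r := by rw [hrdef]; linarith
      have hr2 : r < h x := by rw [hrdef]; linarith
      have hev1 : ∀ᶠ z in 𝓝[>] x, slope ζ x z < r :=
        (hζd.hasDerivWithinAt (s := Ioi x)).limsup_slope_le' (by simp) hr1
      have hevG := my_lsc_avg Gcont Gint Gtop Gne_bot hx hy2
      have hmemIoc : Ioc x b ∈ 𝓝[>] x := Ioc_mem_nhdsGT_of_mem ⟨le_rfl, hx.2⟩
      have hfteq : ft x = ζ x := by
        simp only [hftdef, hζdef, sub_self, mul_zero, neg_zero, Real.exp_zero, mul_one]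
      have hev2 : ∀ᶠ z in 𝓝[>] x, ft z ≤ ζ z := by
        filter_upwards [hevG, hmemIoc] with z hzG hzb
        have hzI : z ∈ Icc (0:ℝ) b := ⟨hx.1.trans hzb.1.le, hzb.2⟩
        have e1 : (∫ w in x..z, β' w) = ∫ w in x..z, (G w).toReal := hβ'sub hxI hzI
        have e2 : B' z = B' x + ∫ w in x..z, β' w := hB'add x hxI z hzI
        have e3 : B' x + y * (z - x) ≤ B' z := by
          have hcomm := mul_comm (z - x) y
          rw [e2, e1]
          linarith [hzG]
        have e4 : Real.exp (-(B' z)) ≤ Real.exp (-(B' x)) * Real.exp (-(y * (z - x))) := by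
          rw [← Real.exp_add]
          apply Real.exp_le_exp.2
          linarith
        calc ft z = φ z * Real.exp (-(B' z)) := rfl
          _ ≤ φ z * (Real.exp (-(B' x)) * Real.exp (-(y * (z - x)))) :=
            mul_le_mul_of_nonneg_left e4 (hφpos z).le
          _ = ζ z := rfl
      have hevA : ∀ᶠ z in 𝓝[>] x, slope ft x z < r := by
        filter_upwards [hev1, hev2, self_mem_nhdsWithin] with z h1 h2 h3
        have hzx : (0:ℝ) < z - x := sub_pos.2 h3
        have hsl : slope ft x z ≤ slope ζ x z := by
          rw [slope_def_field, slope_def_field, hfteq]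
          gcongr
        exact lt_of_le_of_lt hsl h1
      set w' : ℝ := (r + h x) / 2 with hw'def
      have hw1 : r < w' := by rw [hw'def]; linarith
      have hwh : w' < h x := by rw [hw'def]; linarith
      have hw2 : (w' : EReal) < H x := lt_trans (by exact_mod_cast hwh) (hHlt x)
      have hevH := my_lsc_avg Hcont Hint Htop Hne_bot hx hw2
      have hev3 : ∀ᶠ z in 𝓝[>] x, r < slope Cf x z := by
        filter_upwards [hevH, hmemIoc, self_mem_nhdsWithin] with z h1 hzb h3
        have hzI : z ∈ Icc (0:ℝ) b := ⟨hx.1.trans hzb.1.le, hzb.2⟩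
        have hzx : (0:ℝ) < z - x := sub_pos.2 h3
        have e1 : (∫ w in x..z, H' w) = ∫ w in x..z, (H w).toReal := hH'sub hxI hzI
        have e2 : Cf z - Cf x = ∫ w in x..z, H' w := by
          have h6 := integral_add_adjacent_intervals (hsubH (left_mem_Icc.2 hb) hxI)
            (hsubH hxI hzI)
          simp only [hCfdef]
          linarith
        have e5 : w' * (z - x) ≤ Cf z - Cf x := by
          have hcomm := mul_comm (z - x) w'
          rw [e2, e1]
          linarith [h1]
        rw [slope_def_field, lt_div_iff₀ hzx]
        nlinarith [hw1, hzx, e5]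
      exact ⟨r, hevA, hev3⟩
    have hfb := my_fence hftc hCfc (by simp [hCfdef]) hkey b (right_mem_Icc.2 hb)
    have hH'le : (∫ s in (0:ℝ)..b, H' s) ≤ (∫ s in (0:ℝ)..b, h s) + δ := by
      have e1 : (∫ s in (0:ℝ)..b, H' s) = ∫ x, (H x).toReal ∂μ := by
        rw [hIccIoc]; exact integral_congr_ae hH'ae
      have e2 : (∫ s in (0:ℝ)..b, h s) = ∫ x, h x ∂μ := hIccIoc h
      rw [e1, e2]; linarith [Hintlt]
    have hB'0 : B' 0 = 0 := integral_same
    have hft0 : ft 0 = φ 0 := by simp [hftdef, hB'0]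
    have hmain : φ b * Real.exp (-(B' b)) ≤ φ 0 + ((∫ s in (0:ℝ)..b, h s) + δ) :=
      calc φ b * Real.exp (-(B' b)) = ft b := rfl
        _ ≤ ft 0 + ∫ s in (0:ℝ)..b, H' s := hfb
        _ ≤ φ 0 + ((∫ s in (0:ℝ)..b, h s) + δ) := by rw [hft0]; linarith [hH'le]
    have hexpB : Real.exp (B' b) * Real.exp (-(B' b)) = 1 := by
      rw [← Real.exp_add]; simp
    have hφb : φ b ≤ Real.exp (B' b) * (φ 0 + δ)
        + Real.exp (B' b) * ∫ s in (0:ℝ)..b, h s := by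
      have h7 := mul_le_mul_of_nonneg_left hmain (Real.exp_pos (B' b)).le
      have h5 : Real.exp (B' b) * (φ b * Real.exp (-(B' b))) = φ b := by
        rw [mul_comm (φ b) _, ← mul_assoc, hexpB, one_mul]
      calc φ b = Real.exp (B' b) * (φ b * Real.exp (-(B' b))) := h5.symm
        _ ≤ Real.exp (B' b) * (φ 0 + ((∫ s in (0:ℝ)..b, h s) + δ)) := h7
        _ = Real.exp (B' b) * (φ 0 + δ) + Real.exp (B' b) * ∫ s in (0:ℝ)..b, h s := by ring
    have hBb : Real.exp (B' b) ≤ Real.exp δ * Real.exp (Bf b) := by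
      rw [← Real.exp_add]
      apply Real.exp_le_exp.2
      have h8 := hexc 0 (left_mem_Icc.2 hb) b (right_mem_Icc.2 hb) hb
      show (∫ x in (0:ℝ)..b, β' x) ≤ δ + ∫ x in (0:ℝ)..b, β x
      linarith
    -- the continuous weight for the target integral
    have hBfcont : ContinuousOn Bf (Icc 0 b) := by
      have h := continuousOn_primitive_interval (a := (0:ℝ)) (b := b) (μ := volume) (f := β)
        (by rwa [uIcc_of_le hb])
      rwa [uIcc_of_le hb] at h
    have hEcont : ContinuousOn (fun s => Real.exp (∫ τ in s..b, β τ)) (Icc 0 b) := by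
      apply ContinuousOn.congr
        (Real.continuous_exp.comp_continuousOn (continuousOn_const.sub hBfcont))
      intro s hs
      have h9 := hBadd s hs
      simp only [Function.comp]
      congr 1
      show _ = Bf b - Bf s
      linarith
    have hLHSint : IntervalIntegrable (fun s => Real.exp (B' b) * h s) volume 0 b :=
      hhInt.const_mul _
    have hRHSOn : IntegrableOn
        (fun s => Real.exp δ * (Real.exp (∫ τ in s..b, β τ) * γ s)) (Icc 0 b) := by
      have := my_int_mul hγOn hEcont
      exact this.const_mul _
    have hRHSint : IntervalIntegrable
        (fun s => Real.exp δ * (Real.exp (∫ τ in s..b, β τ) * γ s)) volume 0 b :=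
      (intervalIntegrable_iff_integrableOn_Icc_of_le hb).2 hRHSOn
    have hterm : Real.exp (B' b) * (∫ s in (0:ℝ)..b, h s)
        ≤ Real.exp δ * ∫ s in (0:ℝ)..b, γ s * Real.exp (∫ τ in s..b, β τ) := by
      rw [← intervalIntegral.integral_const_mul]
      have hmono : (∫ s in (0:ℝ)..b, Real.exp (B' b) * h s)
          ≤ ∫ s in (0:ℝ)..b, Real.exp δ * (Real.exp (∫ τ in s..b, β τ) * γ s) := by
        apply integral_mono_on hb hLHSint hRHSint
        intro s hs
        have e2 : B' b = B' s + ∫ w in s..b, β' w := hB'add s hs b (right_mem_Icc.2 hb)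
        have e3 : (∫ w in s..b, β' w) ≤ (∫ w in s..b, β w) + δ :=
          hexc s hs b (right_mem_Icc.2 hb) hs.2
        have e4 : Real.exp (B' b) * Real.exp (-(B' s))
            ≤ Real.exp δ * Real.exp (∫ τ in s..b, β τ) := by
          rw [← Real.exp_add, ← Real.exp_add]
          apply Real.exp_le_exp.2
          linarith
        calc Real.exp (B' b) * h s
            = (Real.exp (B' b) * Real.exp (-(B' s))) * γ s := by
              simp only [hhdef]; ring
          _ ≤ (Real.exp δ * Real.exp (∫ τ in s..b, β τ)) * γ s := by
              exact mul_le_mul_of_nonneg_right e4 (hγ0 s)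
          _ = Real.exp δ * (Real.exp (∫ τ in s..b, β τ) * γ s) := by ring
      calc (∫ s in (0:ℝ)..b, Real.exp (B' b) * h s)
          ≤ ∫ s in (0:ℝ)..b, Real.exp δ * (Real.exp (∫ τ in s..b, β τ) * γ s) := hmono
        _ = Real.exp δ * ∫ s in (0:ℝ)..b, Real.exp (∫ τ in s..b, β τ) * γ s := by
            rw [← intervalIntegral.integral_const_mul]
        _ = Real.exp δ * ∫ s in (0:ℝ)..b, γ s * Real.exp (∫ τ in s..b, β τ) := by
            congr 1
            apply intervalIntegral.integral_congr
            intro s _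
            ring
    have hδpos : (0:ℝ) < δ := hδ.1
    have hφ0pos := hφpos 0
    have hterm1 : Real.exp (B' b) * (φ 0 + δ)
        ≤ Real.exp δ * Real.exp (Bf b) * (φ 0 + δ) :=
      mul_le_mul_of_nonneg_right hBb (by linarith)
    calc φ b ≤ Real.exp (B' b) * (φ 0 + δ) + Real.exp (B' b) * ∫ s in (0:ℝ)..b, h s := hφb
      _ ≤ Real.exp δ * Real.exp (Bf b) * (φ 0 + δ)
          + Real.exp δ * ∫ s in (0:ℝ)..b, γ s * Real.exp (∫ τ in s..b, β τ) := by
            linarith [hterm, hterm1]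
      _ = Real.exp δ * (A + δ * Real.exp (Bf b)) := by
            rw [hA]
            simp only [hBf]
            ring
  -- pass to the limit δ → 0⁺
  have hlim : Tendsto (fun δ : ℝ => Real.exp δ * (A + δ * Real.exp (Bf b))) (𝓝[>] 0)
      (𝓝 A) := by
    have hcont : Continuous fun δ : ℝ => Real.exp δ * (A + δ * Real.exp (Bf b)) :=
      Real.continuous_exp.mul (continuous_const.add (continuous_id.mul continuous_const))
    have h0 : Real.exp 0 * (A + 0 * Real.exp (Bf b)) = A := by simp
    have := (hcont.tendsto 0).mono_left (nhdsWithin_le_nhds (s := Ioi (0:ℝ)))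
    rwa [h0] at this
  refine ge_of_tendsto hlim ?_
  filter_upwards [Ioo_mem_nhdsGT_of_mem (by constructor <;> norm_num : (0:ℝ) ∈ Ico (0:ℝ) 1)]
    with δ hδ using key δ hδ

/-- A posteriori error bound: if `e = u − u_app` satisfies
`e' = F(u) − F(u_app) + r`, `β t` bounds the local logarithmic Lipschitz constant
of `F` at `u_app t`, and `α t = ‖r t‖`, then
`‖e t‖ ≤ ∫₀ᵗ α s exp(∫ₛᵗ β) ds + exp(∫₀ᵗ β) ‖e 0‖`. -/
theorem stmt_2 {V : Type*} [NormedAddCommGroup V] [InnerProductSpace ℝ V]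
    [CompleteSpace V]
    (T : ℝ) (hT : 0 < T) (F : V → V) (K : NNReal) (hF : LipschitzWith K F)
    (u uapp r : ℝ → V) (e : ℝ → V) (he : ∀ t, e t = u t - uapp t)
    (e' : ℝ → V)
    (hderiv : ∀ t ∈ Icc (0 : ℝ) T, HasDerivAt e (e' t) t)
    (heq : ∀ t ∈ Icc (0 : ℝ) T, e' t = F (u t) - F (uapp t) + r t)
    (hr : Continuous r)
    (β : ℝ → ℝ) (hβint : IntervalIntegrable β volume 0 T)
    (hβ : ∀ t ∈ Icc (0 : ℝ) T, ∀ v : V, v ≠ uapp t →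
      ⟪v - uapp t, F v - F (uapp t)⟫ ≤ β t * ‖v - uapp t‖ ^ 2)
    (α : ℝ → ℝ) (hα : ∀ t, α t = ‖r t‖) :
    ∀ t ∈ Icc (0 : ℝ) T,
      ‖e t‖ ≤ (∫ s in (0 : ℝ)..t, α s * Real.exp (∫ τ in s..t, β τ))
        + Real.exp (∫ τ in (0 : ℝ)..t, β τ) * ‖e 0‖ := by
  intro t ht
  have hb : (0:ℝ) ≤ t := ht.1
  have hbT : Icc (0:ℝ) t ⊆ Icc 0 T := Icc_subset_Icc le_rfl ht.2
  have hβt : IntervalIntegrable β volume 0 t :=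
    hβint.mono_set (by rw [uIcc_of_le hT.le, uIcc_of_le hb]; exact Icc_subset_Icc le_rfl ht.2)
  have hαcont : Continuous α := by
    have h : α = fun s => ‖r s‖ := funext hα
    rw [h]; exact hr.norm
  have hα0 : ∀ s, 0 ≤ α s := fun s => (hα s) ▸ norm_nonneg (r s)
  have habs : IntervalIntegrable (fun s => |β s|) volume 0 t := by
    simpa [Real.norm_eq_abs] using hβt.norm
  have habsOn : IntegrableOn (fun s => |β s|) (Icc 0 t) :=
    (intervalIntegrable_iff_integrableOn_Icc_of_le hb).1 habs
  -- continuity of the exponential weight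
  have hBft : ContinuousOn (fun s => ∫ x in (0:ℝ)..s, β x) (Icc 0 t) := by
    have h := continuousOn_primitive_interval (a := (0:ℝ)) (b := t) (μ := volume) (f := β)
      (by rw [uIcc_of_le hb]
          exact (intervalIntegrable_iff_integrableOn_Icc_of_le hb).1 hβt)
    rwa [uIcc_of_le hb] at h
  have hβsub : ∀ {x z : ℝ}, x ∈ Icc (0:ℝ) t → z ∈ Icc (0:ℝ) t →
      IntervalIntegrable β volume x z := by
    intro x z hx hz
    exact hβt.mono_set (by rw [uIcc_of_le hb]; exact uIcc_subset_Icc hx hz)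
  have hBadd : ∀ s ∈ Icc (0:ℝ) t,
      (∫ x in (0:ℝ)..s, β x) + ∫ τ in s..t, β τ = ∫ x in (0:ℝ)..t, β x := by
    intro s hs
    exact integral_add_adjacent_intervals (hβsub (left_mem_Icc.2 hb) hs)
      (hβsub hs (right_mem_Icc.2 hb))
  have hEcont : ContinuousOn (fun s => Real.exp (∫ τ in s..t, β τ)) (Icc 0 t) := by
    apply ContinuousOn.congr
      (Real.continuous_exp.comp_continuousOn (continuousOn_const.sub hBft))
    intro s hs
    have h9 := hBadd s hs
    simp only [Function.comp]
    congr 1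
    show _ = (∫ x in (0:ℝ)..t, β x) - ∫ x in (0:ℝ)..s, β x
    linarith
  -- integrability of the two weighted integrands
  have hαEc : ContinuousOn (fun s => α s * Real.exp (∫ τ in s..t, β τ)) (Icc 0 t) :=
    hαcont.continuousOn.mul hEcont
  have hαE : IntervalIntegrable (fun s => α s * Real.exp (∫ τ in s..t, β τ)) volume 0 t := by
    apply ContinuousOn.intervalIntegrable
    rwa [uIcc_of_le hb]
  have hβE : IntervalIntegrable (fun s => |β s| * Real.exp (∫ τ in s..t, β τ)) volume 0 t := by
    refine (intervalIntegrable_iff_integrableOn_Icc_of_le hb).2 ?_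
    refine Integrable.congr (my_int_mul habsOn hEcont) ?_
    filter_upwards [] with s
    exact mul_comm _ _
  have hβEnn : 0 ≤ ∫ s in (0:ℝ)..t, |β s| * Real.exp (∫ τ in s..t, β τ) := by
    apply intervalIntegral.integral_nonneg hb
    intro s _
    positivity
  -- the per-ε bound
  have key : ∀ ε : ℝ, ε ∈ Ioo (0:ℝ) 1 →
      ‖e t‖ ≤ ((∫ s in (0 : ℝ)..t, α s * Real.exp (∫ τ in s..t, β τ))
          + Real.exp (∫ τ in (0 : ℝ)..t, β τ) * ‖e 0‖)
        + ε * (Real.exp (∫ τ in (0 : ℝ)..t, β τ)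
          + ∫ s in (0:ℝ)..t, |β s| * Real.exp (∫ τ in s..t, β τ)) := by
    intro ε hε
    set φ : ℝ → ℝ := fun s => Real.sqrt (⟪e s, e s⟫ + ε ^ 2) with hφdef
    set ψ : ℝ → ℝ := fun s => ⟪e s, e' s⟫ / φ s with hψdef
    set γ : ℝ → ℝ := fun s => α s + |β s| * ε with hγdef
    have hinpos : ∀ s, 0 < ⟪e s, e s⟫ + ε ^ 2 := by
      intro s
      have h1 := real_inner_self_nonneg (x := e s)
      nlinarith [hε.1]
    have hφpos : ∀ s, 0 < φ s := fun s => Real.sqrt_pos.2 (hinpos s)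
    have hφsq : ∀ s, φ s ^ 2 = ‖e s‖ ^ 2 + ε ^ 2 := by
      intro s
      rw [hφdef]
      simp only []
      rw [Real.sq_sqrt (hinpos s).le, real_inner_self_eq_norm_sq]
    have hεφ : ∀ s, ε ≤ φ s := by
      intro s
      nlinarith [hφsq s, hφpos s, hε.1, sq_nonneg (‖e s‖)]
    have hnφ : ∀ s, ‖e s‖ ≤ φ s := by
      intro s
      nlinarith [hφsq s, hφpos s, norm_nonneg (e s), sq_nonneg ε]
    have hφd : ∀ s ∈ Icc (0:ℝ) t, HasDerivAt φ (ψ s) s := by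
      intro s hs
      have hdE := hderiv s (hbT hs)
      have hinner : HasDerivAt (fun z => ⟪e z, e z⟫ + ε ^ 2)
          (⟪e s, e' s⟫ + ⟪e' s, e s⟫) s := (hdE.inner ℝ hdE).add_const _
      have hsq := hinner.sqrt (ne_of_gt (hinpos s))
      have hval : (⟪e s, e' s⟫ + ⟪e' s, e s⟫) / (2 * Real.sqrt (⟪e s, e s⟫ + ε ^ 2))
          = ψ s := by
        rw [hψdef, hφdef]
        simp only []
        rw [real_inner_comm (e' s) (e s)]
        have hne : Real.sqrt (⟪e s, e s⟫ + ε ^ 2) ≠ 0 := ne_of_gt (hφpos s)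
        field_simp
        ring
      rwa [hval] at hsq
    have hle : ∀ s ∈ Icc (0:ℝ) t, ψ s ≤ β s * φ s + γ s := by
      intro s hs
      have hsT := hbT hs
      have hip : ⟪e s, e' s⟫ ≤ β s * ‖e s‖ ^ 2 + α s * ‖e s‖ := by
        rw [heq s hsT, inner_add_right]
        have h1 : ⟪e s, F (u s) - F (uapp s)⟫ ≤ β s * ‖e s‖ ^ 2 := by
          rcases eq_or_ne (u s) (uapp s) with heqv | hnev
          · simp [he s, heqv]
          · have h2 := hβ s hsT (u s) hnev
            rwa [← he s] at h2
        have h2 : ⟪e s, r s⟫ ≤ α s * ‖e s‖ := by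
          have h3 := real_inner_le_norm (e s) (r s)
          have h4 := mul_comm ‖e s‖ ‖r s‖
          rw [hα s]
          linarith
        linarith
      have hchain : ⟪e s, e' s⟫ ≤ (β s * φ s + γ s) * φ s := by
        have he2 : ‖e s‖ ^ 2 = φ s ^ 2 - ε ^ 2 := by linarith [hφsq s]
        have hmm := mul_le_mul_of_nonneg_right (neg_abs_le (β s)) (sq_nonneg ε)
        have h3 : β s * ‖e s‖ ^ 2 ≤ β s * φ s ^ 2 + |β s| * ε ^ 2 := by
          calc β s * ‖e s‖ ^ 2 = β s * φ s ^ 2 - β s * ε ^ 2 := by rw [he2]; ring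
            _ ≤ β s * φ s ^ 2 + |β s| * ε ^ 2 := by nlinarith [hmm]
        have h4 : α s * ‖e s‖ ≤ α s * φ s := mul_le_mul_of_nonneg_left (hnφ s) (hα0 s)
        have h5 : |β s| * ε ^ 2 ≤ |β s| * ε * φ s := by
          have hmm2 := mul_le_mul_of_nonneg_left (hεφ s)
            (mul_nonneg (abs_nonneg (β s)) hε.1.le)
          nlinarith [hmm2]
        have h6 : β s * φ s ^ 2 + |β s| * ε * φ s + α s * φ s = (β s * φ s + γ s) * φ s := by
          rw [hγdef]; ring
        nlinarith [hip]
      rw [hψdef]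
      simp only []
      rw [div_le_iff₀ (hφpos s)]
      exact hchain
    have hγint : IntervalIntegrable γ volume 0 t := by
      rw [hγdef]
      exact (hαcont.intervalIntegrable _ _).add (habs.mul_const ε)
    have hγ0 : ∀ s, 0 ≤ γ s := fun s =>
      add_nonneg (hα0 s) (mul_nonneg (abs_nonneg _) hε.1.le)
    have hmain := my_gronwall hb hφpos hφd hle hβt hγint hγ0
    have hφ0 : φ 0 ≤ ‖e 0‖ + ε := by
      nlinarith [hφsq 0, hφpos 0, norm_nonneg (e 0), hε.1,
        mul_nonneg (norm_nonneg (e 0)) hε.1.le]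
    have hsplit : (∫ s in (0:ℝ)..t, γ s * Real.exp (∫ τ in s..t, β τ))
        = (∫ s in (0:ℝ)..t, α s * Real.exp (∫ τ in s..t, β τ))
          + ε * ∫ s in (0:ℝ)..t, |β s| * Real.exp (∫ τ in s..t, β τ) := by
      rw [← intervalIntegral.integral_const_mul, ← integral_add hαE (hβE.const_mul ε)]
      apply intervalIntegral.integral_congr
      intro s _
      simp only [hγdef]
      ring
    have hexp0 : Real.exp (∫ s in (0:ℝ)..t, β s) * φ 0
        ≤ Real.exp (∫ τ in (0:ℝ)..t, β τ) * ‖e 0‖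
          + ε * Real.exp (∫ τ in (0:ℝ)..t, β τ) := by
      have h7 := mul_le_mul_of_nonneg_left hφ0 (Real.exp_pos (∫ s in (0:ℝ)..t, β s)).le
      calc Real.exp (∫ s in (0:ℝ)..t, β s) * φ 0
          ≤ Real.exp (∫ s in (0:ℝ)..t, β s) * (‖e 0‖ + ε) := h7
        _ = Real.exp (∫ τ in (0:ℝ)..t, β τ) * ‖e 0‖
            + ε * Real.exp (∫ τ in (0:ℝ)..t, β τ) := by ring
    calc ‖e t‖ ≤ φ t := hnφ t
      _ ≤ Real.exp (∫ s in (0:ℝ)..t, β s) * φ 0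
          + ∫ s in (0:ℝ)..t, γ s * Real.exp (∫ τ in s..t, β τ) := hmain
      _ ≤ _ := by
          rw [hsplit]
          linarith [hexp0]
  -- pass to the limit ε → 0⁺
  have hlim : Tendsto (fun ε : ℝ =>
      ((∫ s in (0 : ℝ)..t, α s * Real.exp (∫ τ in s..t, β τ))
          + Real.exp (∫ τ in (0 : ℝ)..t, β τ) * ‖e 0‖)
        + ε * (Real.exp (∫ τ in (0 : ℝ)..t, β τ)
          + ∫ s in (0:ℝ)..t, |β s| * Real.exp (∫ τ in s..t, β τ))) (𝓝[>] 0)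
      (𝓝 ((∫ s in (0 : ℝ)..t, α s * Real.exp (∫ τ in s..t, β τ))
          + Real.exp (∫ τ in (0 : ℝ)..t, β τ) * ‖e 0‖)) := by
    have hcont : Continuous fun ε : ℝ =>
        ((∫ s in (0 : ℝ)..t, α s * Real.exp (∫ τ in s..t, β τ))
            + Real.exp (∫ τ in (0 : ℝ)..t, β τ) * ‖e 0‖)
          + ε * (Real.exp (∫ τ in (0 : ℝ)..t, β τ)
            + ∫ s in (0:ℝ)..t, |β s| * Real.exp (∫ τ in s..t, β τ)) :=
      continuous_const.add (continuous_id.mul continuous_const)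
    have h0 := (hcont.tendsto 0).mono_left (nhdsWithin_le_nhds (s := Ioi (0:ℝ)))
    simpa using h0
  refine ge_of_tendsto hlim ?_
  filter_upwards [Ioo_mem_nhdsGT_of_mem (by constructor <;> norm_num : (0:ℝ) ∈ Ico (0:ℝ) 1)]
    with ε hε using key ε hε
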